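/- Let a > 0 and ω ∈ ℝ. Then the complex number Ω(ω, a) := (1 - e^{-(a+iω)})/(a+iω) is not a nonpositive real number; i.e., Ω(ω, a) ∉ {y ∈ ℝ : y ≤ 0} ⊂ ℂ. In particular Ω(ω,a) ≠ 0 and its principal argument lies in (-π, π). -/

import Mathlib

open Real

theorem Omega_not_nonpos_real (a ω : ℝ) (ha : 0 < a) :
    ((1 - Complex.exp (-(a + ω * Complex.I))) / (a + ω * Complex.I))
        ∉ {w : ℂ | w.im = 0 ∧ w.re ≤ 0} ∧
      (1 - Complex.exp (-(a + ω * Complex.I))) / (a + ω * Complex.I) ≠ 0 ∧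
      Complex.arg ((1 - Complex.exp (-(a + ω * Complex.I))) / (a + ω * Complex.I))
        ∈ Set.Ioo (-π) π := by
  set s : ℂ := (a : ℂ) + (ω : ℂ) * Complex.I with hs
  have hs_re : s.re = a := by simp [hs]
  have hsne : s ≠ 0 := by
    intro h
    rw [h] at hs_re
    simp at hs_re
    linarith
  set Ω : ℂ := (1 - Complex.exp (-s)) / s with hΩdef
  have key : Ω ∉ {w : ℂ | w.im = 0 ∧ w.re ≤ 0} := by
    rintro ⟨him, hre⟩
    set c : ℝ := Ω.re with hc
    have hΩc : Ω = (c : ℂ) := Complex.ext rfl (by simpa using him)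
    have h1 : 1 - Complex.exp (-s) = (c : ℂ) * s := by
      rw [← hΩc, hΩdef, div_mul_cancel₀ _ hsne]
    have h2 : Complex.exp (-s) = 1 - (c : ℂ) * s := by
      rw [← h1]; ring
    have habs : ‖Complex.exp (-s)‖ = Real.exp (-a) := by
      rw [Complex.norm_exp]
      simp [hs_re]
    have hreval : (1 - (c : ℂ) * s).re = 1 - c * a := by
      simp [hs_re]
    have hge : (1:ℝ) ≤ ‖1 - (c : ℂ) * s‖ := by
      calc (1:ℝ) ≤ 1 - c * a := by nlinarith
        _ = (1 - (c : ℂ) * s).re := hreval.symm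
        _ ≤ ‖1 - (c : ℂ) * s‖ := Complex.re_le_norm _
    have hlt : Real.exp (-a) < 1 := Real.exp_lt_one_iff.mpr (by linarith)
    rw [← h2, habs] at hge
    linarith
  have hne : Ω ≠ 0 := by
    intro h
    exact key (by simp [h])
  refine ⟨key, hne, ?_, ?_⟩
  · exact Complex.neg_pi_lt_arg _
  · rcases lt_or_eq_of_le (Complex.arg_le_pi Ω) with h | h
    · exact h
    · exfalso
      rcases Complex.arg_eq_pi_iff.mp h with ⟨hre, him⟩
      exact key ⟨him, le_of_lt hre⟩
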